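/- Let n ≥ 1, let Σ ∈ S_n, let T : S_n → ℝⁿ be a linear map with adjoint T† : ℝⁿ → S_n (i.e. β·T(R) = ⟨T†(β), R⟩ for all β, R), and let Ψ : S_n → S_n be a self-adjoint linear operator. Define the self-adjoint linear operator Π on the inner product space ℝ × ℝⁿ × S_n (with inner product ⟨(α,β,R),(α′,β′,R′)⟩ := αα′ + βᵀβ′ + ⟨R,R′⟩) by Π(α, β, R) := ( α + ⟨Σ, R⟩/2 , Σβ + T(R)/2 , αΣ/2 + T†(β)/2 + Ψ(R)/4 ). Then Π is positive definite if and only if Σ is positive definite and the self-adjoint operator G := Ψ − Σ⟨Σ, ·⟩ − T† ∘ Σ⁻¹ ∘ T on S_n is positive definite. -/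

import Mathlib

open Matrix

section Aux

variable {n : ℕ}
    (Sgm : Matrix (Fin n) (Fin n) ℝ)
    (T : Matrix (Fin n) (Fin n) ℝ →ₗ[ℝ] (Fin n → ℝ))
    (Tdag : (Fin n → ℝ) →ₗ[ℝ] Matrix (Fin n) (Fin n) ℝ)
    (Ψ : Matrix (Fin n) (Fin n) ℝ →ₗ[ℝ] Matrix (Fin n) (Fin n) ℝ)

/-- Evaluation of the quadratic form of `Π`. -/
lemma q_eval_aux
    (hTdag : ∀ (β : Fin n → ℝ) (R : Matrix (Fin n) (Fin n) ℝ), R.IsSymm →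
      β ⬝ᵥ T R = (Tdag β * R).trace)
    (Pi : ℝ × (Fin n → ℝ) × Matrix (Fin n) (Fin n) ℝ →
      ℝ × (Fin n → ℝ) × Matrix (Fin n) (Fin n) ℝ)
    (hPi : ∀ (α : ℝ) (β : Fin n → ℝ) (R : Matrix (Fin n) (Fin n) ℝ),
      Pi (α, β, R) =
        (α + (Sgm * R).trace / 2,
         Sgm *ᵥ β + (1 / 2 : ℝ) • T R,
         (α / 2) • Sgm + (1 / 2 : ℝ) • Tdag β + (1 / 4 : ℝ) • Ψ R))
    (α : ℝ) (β : Fin n → ℝ) (R : Matrix (Fin n) (Fin n) ℝ) (hR : R.IsSymm) :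
    α * (Pi (α, β, R)).1 + β ⬝ᵥ (Pi (α, β, R)).2.1
      + (R * (Pi (α, β, R)).2.2).trace
    = α ^ 2 + α * (Sgm * R).trace + β ⬝ᵥ (Sgm *ᵥ β) + β ⬝ᵥ T R
      + (1 / 4 : ℝ) * (R * Ψ R).trace := by
  rw [hPi]
  have h1 : (R * Sgm).trace = (Sgm * R).trace := Matrix.trace_mul_comm R Sgm
  have h2 : (R * Tdag β).trace = β ⬝ᵥ T R := by
    rw [Matrix.trace_mul_comm, ← hTdag β R hR]
  simp only [dotProduct_add, dotProduct_smul, Matrix.mul_add, Matrix.mul_smul,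
    Matrix.trace_add, Matrix.trace_smul, smul_eq_mul, h1, h2]
  ring

/-- Evaluation of the quadratic form of the Schur complement operator `G`. -/
lemma g_eval_aux
    (hTdag : ∀ (β : Fin n → ℝ) (R : Matrix (Fin n) (Fin n) ℝ), R.IsSymm →
      β ⬝ᵥ T R = (Tdag β * R).trace)
    (R : Matrix (Fin n) (Fin n) ℝ) (hR : R.IsSymm) :
    (R * (Ψ R - (Sgm * R).trace • Sgm - Tdag (Sgm⁻¹ *ᵥ T R))).trace
    = (R * Ψ R).trace - (Sgm * R).trace ^ 2 - (Sgm⁻¹ *ᵥ T R) ⬝ᵥ T R := by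
  have h1 : (R * Sgm).trace = (Sgm * R).trace := Matrix.trace_mul_comm R Sgm
  have h2 : (R * Tdag (Sgm⁻¹ *ᵥ T R)).trace = (Sgm⁻¹ *ᵥ T R) ⬝ᵥ T R := by
    rw [Matrix.trace_mul_comm, ← hTdag _ R hR]
  simp only [Matrix.mul_sub, Matrix.mul_smul, Matrix.trace_sub, Matrix.trace_smul,
    smul_eq_mul, h1, h2]
  ring

end Aux

/-- Generalized Schur complement criterion: the self-adjoint operator `Π` on
`ℝ × ℝⁿ × S_n`, built from the moment data `Σ, T, Ψ`, is positive definite if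
and only if `Σ ≻ 0` and the Schur complement operator
`G = Ψ − Σ⟨Σ, ·⟩ − T† ∘ Σ⁻¹ ∘ T` on `S_n` is positive definite. -/
theorem schur_complement_criterion_for_Pi
    {n : ℕ} (hn : 1 ≤ n)
    (Sgm : Matrix (Fin n) (Fin n) ℝ) (hSgmSymm : Sgm.IsSymm)
    (T : Matrix (Fin n) (Fin n) ℝ →ₗ[ℝ] (Fin n → ℝ))
    (Tdag : (Fin n → ℝ) →ₗ[ℝ] Matrix (Fin n) (Fin n) ℝ)
    (hTdagSymm : ∀ β : Fin n → ℝ, (Tdag β).IsSymm)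
    (hTdag : ∀ (β : Fin n → ℝ) (R : Matrix (Fin n) (Fin n) ℝ), R.IsSymm →
      β ⬝ᵥ T R = (Tdag β * R).trace)
    (Ψ : Matrix (Fin n) (Fin n) ℝ →ₗ[ℝ] Matrix (Fin n) (Fin n) ℝ)
    (hΨsymm : ∀ R : Matrix (Fin n) (Fin n) ℝ, R.IsSymm → (Ψ R).IsSymm)
    (hΨsa : ∀ X Y : Matrix (Fin n) (Fin n) ℝ, X.IsSymm → Y.IsSymm →
      (X * Ψ Y).trace = (Ψ X * Y).trace)
    (Pi : ℝ × (Fin n → ℝ) × Matrix (Fin n) (Fin n) ℝ →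
      ℝ × (Fin n → ℝ) × Matrix (Fin n) (Fin n) ℝ)
    (hPi : ∀ (α : ℝ) (β : Fin n → ℝ) (R : Matrix (Fin n) (Fin n) ℝ),
      Pi (α, β, R) =
        (α + (Sgm * R).trace / 2,
         Sgm *ᵥ β + (1 / 2 : ℝ) • T R,
         (α / 2) • Sgm + (1 / 2 : ℝ) • Tdag β + (1 / 4 : ℝ) • Ψ R)) :
    (∀ p : ℝ × (Fin n → ℝ) × Matrix (Fin n) (Fin n) ℝ,
      p.2.2.IsSymm → p ≠ 0 →
        0 < p.1 * (Pi p).1 + p.2.1 ⬝ᵥ (Pi p).2.1 + (p.2.2 * (Pi p).2.2).trace)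
    ↔
    (Sgm.PosDef ∧
      ∀ R : Matrix (Fin n) (Fin n) ℝ, R.IsSymm → R ≠ 0 →
        0 < (R * (Ψ R - (Sgm * R).trace • Sgm - Tdag (Sgm⁻¹ *ᵥ T R))).trace) := by
  have hSgmHerm : Sgm.IsHermitian := by
    rw [Matrix.IsHermitian, Matrix.conjTranspose_eq_transpose_of_trivial]
    exact hSgmSymm
  have qeval := q_eval_aux Sgm T Tdag Ψ hTdag Pi hPi
  have geval := g_eval_aux Sgm T Tdag Ψ hTdag
  constructor
  · intro h
    have hPD : Sgm.PosDef := by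
      refine Matrix.PosDef.of_dotProduct_mulVec_pos hSgmHerm fun x hx => ?_
      have hx' : ((0 : ℝ), x, (0 : Matrix (Fin n) (Fin n) ℝ)) ≠ 0 := by
        intro hc
        exact hx (congrArg (fun q => q.2.1) hc)
      have := h (0, x, 0) (by simp [Matrix.IsSymm]) hx'
      rw [qeval 0 x 0 (by simp [Matrix.IsSymm])] at this
      simpa using this
    refine ⟨hPD, fun R hR hR0 => ?_⟩
    set s : ℝ := (Sgm * R).trace with hs
    set t : Fin n → ℝ := T R with ht
    set c : Fin n → ℝ := Sgm⁻¹ *ᵥ t with hc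
    have hSc : Sgm *ᵥ c = t := by
      rw [hc, Matrix.mulVec_mulVec, Matrix.mul_nonsing_inv _ hPD.det_pos.ne'.isUnit,
        Matrix.one_mulVec]
    have hp0 : ((-(1/2) * s : ℝ), ((-(1/2) : ℝ) • c), R) ≠ 0 := by
      intro hcq
      exact hR0 (congrArg (fun q => q.2.2) hcq)
    have hqpos := h (-(1/2) * s, (-(1/2) : ℝ) • c, R) hR hp0
    rw [qeval (-(1/2) * s) ((-(1/2) : ℝ) • c) R hR] at hqpos
    have e1 : ((-(1/2) : ℝ) • c) ⬝ᵥ (Sgm *ᵥ ((-(1/2) : ℝ) • c))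
        = (1/4 : ℝ) * (c ⬝ᵥ t) := by
      rw [Matrix.mulVec_smul, hSc, smul_dotProduct, dotProduct_smul]
      simp [smul_eq_mul]; ring
    have e2 : ((-(1/2) : ℝ) • c) ⬝ᵥ t = (-(1/2) : ℝ) * (c ⬝ᵥ t) := by
      rw [smul_dotProduct]; simp [smul_eq_mul]
    rw [e1, e2] at hqpos
    rw [geval R hR, ← ht, ← hc, ← hs]
    nlinarith [hqpos]
  · rintro ⟨hPD, hG⟩ ⟨α, β, R⟩ hsym hp0
    simp only at hsym ⊢
    rw [qeval α β R hsym]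
    by_cases hR : R = 0
    · subst hR
      simp only [map_zero, Matrix.mul_zero, Matrix.trace_zero, mul_zero, add_zero,
        dotProduct_zero]
      by_cases hb : β = 0
      · have ha : α ≠ 0 := by
          intro hac
          exact hp0 (by simp [hac, hb, Prod.ext_iff])
        have hb0 : β ⬝ᵥ (Sgm *ᵥ β) = 0 := by simp [hb]
        rw [hb0]
        nlinarith [sq_pos_of_ne_zero ha]
      · have := hPD.dotProduct_mulVec_pos hb
        rw [star_trivial] at this
        nlinarith [sq_nonneg α]
    · have hGf := hG R hsym hR
      rw [geval R hsym] at hGf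
      set s : ℝ := (Sgm * R).trace with hs
      set t : Fin n → ℝ := T R with ht
      set c : Fin n → ℝ := Sgm⁻¹ *ᵥ t with hc
      have hSc : Sgm *ᵥ c = t := by
        rw [hc, Matrix.mulVec_mulVec, Matrix.mul_nonsing_inv _ hPD.det_pos.ne'.isUnit,
          Matrix.one_mulVec]
      set v : Fin n → ℝ := β + (1/2 : ℝ) • c with hv
      have hvpos : 0 ≤ v ⬝ᵥ (Sgm *ᵥ v) := by
        have := hPD.posSemidef.dotProduct_mulVec_nonneg v
        rwa [star_trivial] at this
      have hexp : v ⬝ᵥ (Sgm *ᵥ v)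
          = β ⬝ᵥ (Sgm *ᵥ β) + β ⬝ᵥ t + (1/4 : ℝ) * (c ⬝ᵥ t) := by
        have hcb : c ⬝ᵥ (Sgm *ᵥ β) = β ⬝ᵥ t := by
          rw [Matrix.dotProduct_mulVec, ← Matrix.mulVec_transpose, hSgmSymm.eq, hSc,
            dotProduct_comm]
        rw [hv, Matrix.mulVec_add, Matrix.mulVec_smul, hSc]
        simp only [add_dotProduct, dotProduct_add, smul_dotProduct, dotProduct_smul,
          smul_eq_mul, hcb]
        ring
      nlinarith [sq_nonneg (α + s / 2), hvpos, hexp, hGf]
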